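/- Let L be a complex Banach Lie algebra, let Z be its centre, and let C denote the closure of the linear span of {⁅a,b⁆ : a, b ∈ L}. With the convention that an intersection over an empty family equals L: (i) the intersection of all maximal proper closed Lie ideals of finite codimension in L is contained in C; (ii) C ∩ Z is contained in the intersection of all maximal proper closed Lie subalgebras of finite codimension in L; (iii) if L is solvable, then the intersection of all maximal proper closed Lie ideals of finite codimension in L equals C. -/

import Mathlib

/-- Relations between the Jacobson/Frattini-type intersections, the closed derived ideal C
and the centre Z: P_{𝔍max}(L) ⊆ C; C ∩ Z ⊆ P_{𝔖max}(L); if L is solvable then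
P_{𝔍max}(L) = C. -/
theorem stmt_12 {L : Type*} [LieRing L] [LieAlgebra ℂ L] [MetricSpace L] [CompleteSpace L]
    (hdist : ∀ x y z : L, dist (x + z) (y + z) = dist x y)
    (hnorm : ∀ (c : ℂ) (x : L), dist (c • x) 0 = ‖c‖ * dist x 0)
    (hbracket : Continuous fun p : L × L => ⁅p.1, p.2⁆) :
    (((sInf {J : LieIdeal ℂ L | J ≠ ⊤ ∧ IsClosed (J : Set L) ∧
          FiniteDimensional ℂ (L ⧸ (J : Submodule ℂ L)) ∧
          ∀ I : LieIdeal ℂ L, J < I → I = ⊤} : LieIdeal ℂ L) : Set L) ⊆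
        closure ↑(Submodule.span ℂ {z : L | ∃ a b : L, z = ⁅a, b⁆})) ∧
    ((closure ↑(Submodule.span ℂ {z : L | ∃ a b : L, z = ⁅a, b⁆}) ∩
          ((LieAlgebra.center ℂ L : LieIdeal ℂ L) : Set L)) ⊆
        ((sInf {M : LieSubalgebra ℂ L | M ≠ ⊤ ∧ IsClosed (M : Set L) ∧
          FiniteDimensional ℂ (L ⧸ M.toSubmodule) ∧
          ∀ N : LieSubalgebra ℂ L, M < N → N = ⊤} : LieSubalgebra ℂ L) : Set L)) ∧
    (LieAlgebra.IsSolvable L →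
      ((sInf {J : LieIdeal ℂ L | J ≠ ⊤ ∧ IsClosed (J : Set L) ∧
          FiniteDimensional ℂ (L ⧸ (J : Submodule ℂ L)) ∧
          ∀ I : LieIdeal ℂ L, J < I → I = ⊤} : LieIdeal ℂ L) : Set L) =
        closure ↑(Submodule.span ℂ {z : L | ∃ a b : L, z = ⁅a, b⁆})) := by
  letI : NormedAddCommGroup L :=
    { (inferInstance : AddCommGroup L), (inferInstance : MetricSpace L) with
      norm := fun x => dist x 0
      dist_eq := fun x y => by
        have h := hdist 0 (-x + y) x
        rw [zero_add, show -x + y + x = y by abel] at h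
        show dist x y = dist (-x + y) 0
        rw [h, dist_comm] }
  letI : NormedSpace ℂ L := ⟨fun c x => le_of_eq (hnorm c x)⟩
  set sp := Submodule.span ℂ {z : L | ∃ a b : L, z = ⁅a, b⁆} with hsp
  have hspan_mem : ∀ a b : L, ⁅a, b⁆ ∈ sp := fun a b => Submodule.subset_span ⟨a, b, rfl⟩
  set Csub : Submodule ℂ L := sp.topologicalClosure with hCsub
  haveI hCc : IsClosed (Csub : Set L) := sp.isClosed_topologicalClosure
  -- Hahn–Banach separation
  have hfunc : ∀ x : L, x ∉ closure (sp : Set L) → ∃ f : L →ₗ[ℂ] ℂ, Continuous f ∧ f x ≠ 0 ∧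
      ∀ c ∈ Csub, f c = 0 := by
    intro x hx
    have hxm : x ∉ Csub := by rwa [← Submodule.topologicalClosure_coe] at hx
    have hne : (Submodule.Quotient.mk x : L ⧸ Csub) ≠ 0 := by
      simpa [Submodule.Quotient.mk_eq_zero] using hxm
    obtain ⟨g, -, hgx⟩ := exists_dual_vector ℂ _ (norm_ne_zero_iff.mpr hne)
    refine ⟨g.toLinearMap ∘ₗ Csub.mkQ, ?_, ?_, ?_⟩
    · exact g.continuous.comp continuous_quot_mk
    · simp only [LinearMap.coe_comp, Function.comp_apply, Submodule.mkQ_apply,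
        ContinuousLinearMap.coe_coe]
      rw [hgx]
      exact Complex.ofReal_ne_zero.mpr (norm_ne_zero_iff.mpr hne)
    · intro c hc
      simp [Submodule.Quotient.mk_eq_zero, hc, (Submodule.Quotient.mk_eq_zero _).2 hc]
  -- Part (i)
  have part1 : ((sInf {J : LieIdeal ℂ L | J ≠ ⊤ ∧ IsClosed (J : Set L) ∧
        FiniteDimensional ℂ (L ⧸ (J : Submodule ℂ L)) ∧
        ∀ I : LieIdeal ℂ L, J < I → I = ⊤} : LieIdeal ℂ L) : Set L) ⊆
      closure (sp : Set L) := by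
    intro x hx
    by_contra hxC
    obtain ⟨f, hfc, hfx, hfC⟩ := hfunc x hxC
    have hker : ∀ a b : L, f ⁅a, b⁆ = 0 := fun a b =>
      hfC _ (sp.le_topologicalClosure (hspan_mem a b))
    let H : LieIdeal ℂ L :=
      { LinearMap.ker f with
        lie_mem := fun {a m} _ => LinearMap.mem_ker.mpr (hker a m) }
    have hmemH : ∀ y : L, y ∈ H ↔ f y = 0 := fun y => Iff.rfl
    have hfy_of : ∀ y : L, y ∈ H → f y = 0 := fun y hy => (hmemH y).mp hy
    have hHne : H ≠ ⊤ := by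
      intro h
      exact hfx (hfy_of x (by rw [h]; exact LieSubmodule.mem_top x))
    have hHcl : IsClosed (H : Set L) := by
      have : (H : Set L) = f ⁻¹' {0} := by
        ext y; simp [hmemH y]
      rw [this]
      exact IsClosed.preimage hfc isClosed_singleton
    have hHfd : FiniteDimensional ℂ (L ⧸ (H : Submodule ℂ L)) := by
      have : (H : Submodule ℂ L) = LinearMap.ker f := rfl
      rw [this]
      exact LinearEquiv.finiteDimensional (f.quotKerEquivRange).symm
    have hHmax : ∀ I : LieIdeal ℂ L, H < I → I = ⊤ := by
      intro I hI
      obtain ⟨y, hyI, hyH⟩ := SetLike.exists_of_lt hI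
      have hfy : f y ≠ 0 := fun h => hyH ((hmemH y).mpr h)
      rw [eq_top_iff]
      intro z _
      have h1 : z - (f z / f y) • y ∈ H := by
        rw [hmemH]
        simp [div_mul_cancel₀ _ hfy]
      have : z = (z - (f z / f y) • y) + (f z / f y) • y := by ring_nf; abel
      rw [this]
      exact I.add_mem (le_of_lt hI h1) (I.smul_mem _ hyI)
    have hH : H ∈ {J : LieIdeal ℂ L | J ≠ ⊤ ∧ IsClosed (J : Set L) ∧
        FiniteDimensional ℂ (L ⧸ (J : Submodule ℂ L)) ∧
        ∀ I : LieIdeal ℂ L, J < I → I = ⊤} := ⟨hHne, hHcl, hHfd, hHmax⟩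
    rw [LieSubmodule.coe_sInf] at hx
    exact hfx (hfy_of x (Set.mem_iInter₂.mp hx H hH))
  refine ⟨part1, ?_, ?_⟩
  · -- Part (ii)
    rintro x ⟨hxC, hxZ⟩
    have hxZ' : ∀ y : L, ⁅y, x⁆ = 0 := (LieModule.mem_maxTrivSubmodule ℂ L L x).mp hxZ
    have hxZ'' : ∀ y : L, ⁅x, y⁆ = 0 := fun y => by rw [← lie_skew, hxZ' y, neg_zero]
    rw [LieSubalgebra.coe_sInf]
    refine Set.mem_iInter₂.mpr fun M hM => ?_
    by_contra hxM
    let N : LieSubalgebra ℂ L :=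
      { M.toSubmodule ⊔ (ℂ ∙ x) with
        lie_mem' := by
          intro a b ha hb
          obtain ⟨m, hm, u, hu, rfl⟩ := Submodule.mem_sup.mp ha
          obtain ⟨c, rfl⟩ := Submodule.mem_span_singleton.mp hu
          obtain ⟨m', hm', u', hu', rfl⟩ := Submodule.mem_sup.mp hb
          obtain ⟨c', rfl⟩ := Submodule.mem_span_singleton.mp hu'
          have : ⁅m + c • x, m' + c' • x⁆ = ⁅m, m'⁆ := by
            simp [lie_add, add_lie, lie_smul, smul_lie, hxZ', hxZ'']
          rw [this]
          exact Submodule.mem_sup_left (M.lie_mem hm hm') }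
    have hxN : x ∈ N := Submodule.mem_sup_right (Submodule.mem_span_singleton_self x)
    have hMN : M < N := by
      refine lt_of_le_of_ne (fun z hz => Submodule.mem_sup_left hz) ?_
      intro h
      exact hxM (h ▸ hxN)
    have hNtop : N = ⊤ := hM.2.2.2 N hMN
    have hspM : (sp : Set L) ⊆ (M : Set L) := by
      rw [hsp]
      refine Submodule.span_le.mpr ?_
      rintro z ⟨a, b, rfl⟩
      have haN : a ∈ N := by rw [hNtop]; exact LieSubalgebra.mem_top a
      have hbN : b ∈ N := by rw [hNtop]; exact LieSubalgebra.mem_top b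
      obtain ⟨m, hm, u, hu, rfl⟩ := Submodule.mem_sup.mp haN
      obtain ⟨c, rfl⟩ := Submodule.mem_span_singleton.mp hu
      obtain ⟨m', hm', u', hu', rfl⟩ := Submodule.mem_sup.mp hbN
      obtain ⟨c', rfl⟩ := Submodule.mem_span_singleton.mp hu'
      have : ⁅m + c • x, m' + c' • x⁆ = ⁅m, m'⁆ := by
        simp [lie_add, add_lie, lie_smul, smul_lie, hxZ', hxZ'']
      rw [this]
      exact M.lie_mem hm hm'
    exact hxM (closure_minimal hspM hM.2.1 hxC)
  · -- Part (iii)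
    intro hsolv
    refine Set.Subset.antisymm part1 ?_
    rw [LieSubmodule.coe_sInf]
    refine Set.subset_iInter₂ fun J hJ => ?_
    obtain ⟨hJne, hJcl, -, hJmax⟩ := hJ
    have e1 : LieAlgebra.derivedSeries ℂ L 1 = ⁅(⊤ : LieIdeal ℂ L), ⊤⁆ := by
      rw [LieAlgebra.derivedSeries_def, LieAlgebra.derivedSeriesOfIdeal_succ,
        LieAlgebra.derivedSeriesOfIdeal_zero]
    have hD : LieAlgebra.derivedSeries ℂ L 1 ≤ J := by
      by_contra hDJ
      have h1 : J ⊔ LieAlgebra.derivedSeries ℂ L 1 = ⊤ := hJmax _ (left_lt_sup.mpr hDJ)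
      have key : ∀ n, J ⊔ LieAlgebra.derivedSeries ℂ L (n + 1) = ⊤ := by
        intro n
        induction n with
        | zero => exact h1
        | succ n ih =>
          have e2 : LieAlgebra.derivedSeries ℂ L (n + 2)
              = ⁅LieAlgebra.derivedSeries ℂ L (n + 1), LieAlgebra.derivedSeries ℂ L (n + 1)⁆ := by
            rw [LieAlgebra.derivedSeries_def, LieAlgebra.derivedSeries_def,
              LieAlgebra.derivedSeriesOfIdeal_succ]
          have h2 : LieAlgebra.derivedSeries ℂ L 1
              ≤ J ⊔ LieAlgebra.derivedSeries ℂ L (n + 2) := by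
            rw [e1, ← ih, LieSubmodule.sup_lie, LieSubmodule.lie_sup, LieSubmodule.lie_sup, e2]
            refine sup_le (sup_le ?_ ?_) (sup_le ?_ le_sup_right)
            · exact le_sup_of_le_left (LieSubmodule.lie_le_left _ _)
            · exact le_sup_of_le_left (LieSubmodule.lie_le_left _ _)
            · exact le_sup_of_le_left (LieSubmodule.lie_le_right _ _)
          rw [eq_top_iff, ← h1]
          calc J ⊔ LieAlgebra.derivedSeries ℂ L 1
              ≤ J ⊔ (J ⊔ LieAlgebra.derivedSeries ℂ L (n + 2)) := sup_le_sup_left h2 J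
            _ = J ⊔ LieAlgebra.derivedSeries ℂ L (n + 2) := by rw [← sup_assoc, sup_idem]
      obtain ⟨k, hk⟩ := (LieAlgebra.isSolvable_iff ℂ L).mp hsolv
      have hk1 : LieAlgebra.derivedSeries ℂ L (k + 1) = ⊥ := by
        have e2 : LieAlgebra.derivedSeries ℂ L (k + 1)
            = ⁅LieAlgebra.derivedSeries ℂ L k, LieAlgebra.derivedSeries ℂ L k⁆ := by
          rw [LieAlgebra.derivedSeries_def, LieAlgebra.derivedSeries_def,
            LieAlgebra.derivedSeriesOfIdeal_succ]
        rw [e2, hk]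
        exact LieSubmodule.lie_bot _
      have := key k
      rw [hk1, sup_bot_eq] at this
      exact hJne this
    have hspJ : (sp : Set L) ⊆ (J : Set L) := by
      rw [hsp]
      refine Submodule.span_le.mpr ?_
      rintro z ⟨a, b, rfl⟩
      exact hD (e1 ▸ LieSubmodule.lie_mem_lie (LieSubmodule.mem_top a) (LieSubmodule.mem_top b))
    exact closure_minimal hspJ hJcl
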